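/- arXiv:1502.03365 — 4 statements merged into one kernel-verified Lean document; each statement's English description precedes it below -/
import Mathlib

section
/- Fix a pair of vertices u < v and two type assignments σ, δ ∈ {±1}^n. Under the labeled Erdős–Rényi distribution ℙ'_n, define for a realization (G, L): W_{uv}(G, L, σ) = 2a·μ(ℓ)/(a·μ(ℓ) + b·ν(ℓ)) if σ_u = σ_v, (u,v) ∈ E(G) and L_{uv} = ℓ; W_{uv}(G, L, σ) = 2b·ν(ℓ)/(a·μ(ℓ) + b·ν(ℓ)) if σ_u ≠ σ_v, (u,v) ∈ E(G) and L_{uv} = ℓ; W_{uv}(G, L, σ) = (1 − a/n)/(1 − (a+b)/(2n)) if σ_u = σ_v and (u,v) ∉ E(G); and W_{uv}(G, L, σ) = (1 − b/n)/(1 − (a+b)/(2n)) if σ_u ≠ σ_v and (u,v) ∉ E(G). Then there exists a constant C depending only on a, b, μ, ν such that for all n: if σ_u·σ_v = δ_u·δ_v, then |E_{ℙ'_n}[W_{uv}(G,L,σ)·W_{uv}(G,L,δ)] − (1 + τ/n + (a−b)²/(4n²))| ≤ C/n³, and if σ_u·σ_v ≠ δ_u·δ_v, then |E_{ℙ'_n}[W_{uv}(G,L,σ)·W_{uv}(G,L,δ)]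 − (1 − τ/n − (a−b)²/(4n²))| ≤ C/n³. -/
open Finset Filter Real

namespace LSBM

/-- Ordered pairs `u < v` of vertices. -/
abbrev Pairs (n : ℕ) := {p : Fin n × Fin n // p.1 < p.2}

/-- A labeled-graph configuration: each pair `u < v` carries `none` (no edge)
or `some ℓ` (an edge with label `ℓ`). -/
abbrev EdgeConf (n : ℕ) (L : Type*) := Pairs n → Option L

variable {L : Type*}

/-- The label (if any) on the edge between `u` and `v`. -/
def getLabel {n : ℕ} (E : EdgeConf n L) (u v : Fin n) : Option L :=
  if h : u < v then E ⟨(u, v), h⟩ else if h' : v < u then E ⟨(v, u), h'⟩ else none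

/-- Per-pair mass under the labeled stochastic block model. -/
noncomputable def sbmPairMass (n : ℕ) (a b : ℝ) (μ ν : L → ℝ) (same : Bool) : Option L → ℝ
  | none => if same then 1 - a / n else 1 - b / n
  | some ℓ => if same then (a / n) * μ ℓ else (b / n) * ν ℓ

/-- Joint mass of a (type assignment, labeled graph) outcome under the labeled SBM. -/
noncomputable def sbmMass (n : ℕ) (a b : ℝ) (μ ν : L → ℝ)
    (x : (Fin n → Bool) × EdgeConf n L) : ℝ :=
  (1 / 2 : ℝ) ^ n *
    ∏ p : Pairs n, sbmPairMass n a b μ ν (x.1 p.1.1 == x.1 p.1.2) (x.2 p)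

/-- Probability of an event under the labeled SBM (joint in types and graph). -/
noncomputable def sbmProb [Fintype L] (n : ℕ) (a b : ℝ) (μ ν : L → ℝ)
    (A : Set ((Fin n → Bool) × EdgeConf n L)) : ℝ :=
  ∑ x : (Fin n → Bool) × EdgeConf n L, A.indicator (sbmMass n a b μ ν) x

/-- Probability of a labeled-graph event under the labeled SBM (marginal over types). -/
noncomputable def sbmGraphProb [Fintype L] (n : ℕ) (a b : ℝ) (μ ν : L → ℝ)
    (A : Set (EdgeConf n L)) : ℝ :=
  sbmProb n a b μ ν {x | x.2 ∈ A}

/-- Conditional (given the type assignment `σ`) probability of a labeled-graph event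
under the labeled SBM. -/
noncomputable def sbmCondProb [Fintype L] (n : ℕ) (a b : ℝ) (μ ν : L → ℝ)
    (σ : Fin n → Bool) (A : Set (EdgeConf n L)) : ℝ :=
  ∑ E : EdgeConf n L, A.indicator
    (fun E' => ∏ p : Pairs n, sbmPairMass n a b μ ν (σ p.1.1 == σ p.1.2) (E' p)) E

/-- Conditional (given `σ`) expectation of a function of the labeled graph. -/
noncomputable def sbmCondExp [Fintype L] (n : ℕ) (a b : ℝ) (μ ν : L → ℝ)
    (σ : Fin n → Bool) (f : EdgeConf n L → ℝ) : ℝ :=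
  ∑ E : EdgeConf n L,
    (∏ p : Pairs n, sbmPairMass n a b μ ν (σ p.1.1 == σ p.1.2) (E p)) * f E

/-- Per-pair mass under the labeled Erdős–Rényi model. -/
noncomputable def erPairMass (n : ℕ) (a b : ℝ) (μ ν : L → ℝ) : Option L → ℝ
  | none => 1 - (a + b) / (2 * n)
  | some ℓ => ((a + b) / (2 * n)) * ((a * μ ℓ + b * ν ℓ) / (a + b))

/-- Mass of a labeled graph under the labeled Erdős–Rényi model. -/
noncomputable def erMass [Fintype L] (n : ℕ) (a b : ℝ) (μ ν : L → ℝ) (E : EdgeConf n L) : ℝ :=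
  ∏ p : Pairs n, erPairMass n a b μ ν (E p)

/-- Probability of a labeled-graph event under the labeled Erdős–Rényi model. -/
noncomputable def erProb [Fintype L] (n : ℕ) (a b : ℝ) (μ ν : L → ℝ)
    (A : Set (EdgeConf n L)) : ℝ :=
  ∑ E : EdgeConf n L, A.indicator (erMass n a b μ ν) E

/-- Expectation of a function of the labeled graph under the labeled Erdős–Rényi model. -/
noncomputable def erExp [Fintype L] (n : ℕ) (a b : ℝ) (μ ν : L → ℝ)
    (f : EdgeConf n L → ℝ) : ℝ :=
  ∑ E : EdgeConf n L, erMass n a b μ ν E * f E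

/-- `μ` is a probability distribution on the (finite) label set. -/
def IsProbVec [Fintype L] (μ : L → ℝ) : Prop := (∀ ℓ, 0 ≤ μ ℓ) ∧ ∑ ℓ, μ ℓ = 1

/-- The reconstruction-threshold parameter `τ`. -/
noncomputable def tau [Fintype L] (a b : ℝ) (μ ν : L → ℝ) : ℝ :=
  ∑ ℓ, (a * μ ℓ - b * ν ℓ) ^ 2 / (2 * (a * μ ℓ + b * ν ℓ))

/-- The weighted adjacency matrix `W` with `W u v = A u v * w (L u v)`. -/
def Wmat {n : ℕ} (w : L → ℝ) (E : EdgeConf n L) : Matrix (Fin n) (Fin n) ℝ :=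
  fun u v => match getLabel E u v with
    | none => 0
    | some ℓ => w ℓ

/-- The ±1 vector associated with a Boolean type assignment (`true ↦ +1`). -/
def signVec {n : ℕ} (σ : Fin n → Bool) : Fin n → ℝ := fun u => if σ u then 1 else -1

/-- `x` is a vector with entries in `{±1}`. -/
def IsSignVec {n : ℕ} (x : Fin n → ℝ) : Prop := ∀ u, x u = 1 ∨ x u = -1

/-- Componentwise sign of a real vector. -/
noncomputable def signR {n : ℕ} (x : Fin n → ℝ) : Fin n → ℝ :=
  fun u => if 0 ≤ x u then 1 else -1

open Classical in
/-- Hamming distance between two vectors. -/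
noncomputable def hamming {n : ℕ} (x y : Fin n → ℝ) : ℕ :=
  (univ.filter fun u => x u ≠ y u).card

/-- The overlap `Q(x, y) = 1/2 - (1/n) min(d(x,y), d(x,-y))`. -/
noncomputable def overlap (n : ℕ) (x y : Fin n → ℝ) : ℝ :=
  1 / 2 - (1 / n) * min (hamming x y : ℝ) (hamming x (-y) : ℝ)

open Classical in
/-- The weight of the cut induced by a ±1 assignment `σ`:
`∑_{(u,v) : u < v, σ_u ≠ σ_v} W_{uv}`. -/
noncomputable def cutWeight {n : ℕ} (w : L → ℝ) (E : EdgeConf n L) (σ : Fin n → ℝ) : ℝ :=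
  ∑ p : Pairs n, if σ p.1.1 ≠ σ p.1.2 then Wmat w E p.1.1 p.1.2 else 0

/-- The quadratic form `xᵀ M x`. -/
def quadForm {n : ℕ} (M : Matrix (Fin n) (Fin n) ℝ) (x : Fin n → ℝ) : ℝ :=
  ∑ u, ∑ v, x u * M u v * x v

/-- The entrywise inner product `⟨A, B⟩ = ∑_{u,v} A u v * B u v`. -/
def mInner {n : ℕ} (A B : Matrix (Fin n) (Fin n) ℝ) : ℝ :=
  ∑ u, ∑ v, A u v * B u v

/-- The degree of a vertex. -/
def degree {n : ℕ} (E : EdgeConf n L) (u : Fin n) : ℕ :=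
  (univ.filter fun v => (getLabel E u v).isSome).card

open Classical in
/-- The weighted adjacency matrix of the graph obtained by removing all edges incident
to vertices of degree larger than `(3/2)·(a+b)/2`. -/
noncomputable def prunedW {n : ℕ} (a b : ℝ) (w : L → ℝ) (E : EdgeConf n L) :
    Matrix (Fin n) (Fin n) ℝ :=
  fun u v =>
    if (degree E u : ℝ) ≤ (3 / 2) * ((a + b) / 2) ∧
       (degree E v : ℝ) ≤ (3 / 2) * ((a + b) / 2)
    then Wmat w E u v else 0

/-- The conditional (given `σ`) entrywise expectation `E[W | σ]` of the weighted
adjacency matrix. -/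
noncomputable def condEW {n : ℕ} [Fintype L] (a b : ℝ) (μ ν w : L → ℝ)
    (σ : Fin n → Bool) : Matrix (Fin n) (Fin n) ℝ :=
  fun u v =>
    if u = v then 0
    else if σ u = σ v then (a / n) * ∑ ℓ, μ ℓ * w ℓ
    else (b / n) * ∑ ℓ, ν ℓ * w ℓ

/-- The matrix `D' = W' - (α/n) J` used in the spectral method, where
`α = (1/2)·∑_ℓ w(ℓ)(aμ(ℓ)+bν(ℓ))` and `J` is the all-one matrix. -/
noncomputable def Dmat {n : ℕ} [Fintype L] (a b : ℝ) (μ ν w : L → ℝ)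
    (E : EdgeConf n L) : Matrix (Fin n) (Fin n) ℝ :=
  fun u v => prunedW a b w E u v - ((1 / 2) * ∑ ℓ, w ℓ * (a * μ ℓ + b * ν ℓ)) / n

/-- The spectral norm (ℓ²-operator norm) of a real square matrix. -/
noncomputable def specNorm {n : ℕ} (M : Matrix (Fin n) (Fin n) ℝ) : ℝ :=
  ‖Matrix.toEuclideanCLM (𝕜 := ℝ) M‖

/-- The number of `k`-cycles carrying the label sequence `ℓ`, in the canonical
orientation: starting from the minimal-index vertex of the cycle toward its
neighbor of smaller index. -/
def cycleCount [DecidableEq L] (n k : ℕ) (E : EdgeConf n L) (ℓ : Fin k → L) : ℕ :=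
  if hk : 0 < k then
    haveI : NeZero k := ⟨hk.ne'⟩
    (univ.filter fun c : Fin k → Fin n =>
      Function.Injective c ∧ (∀ i, c 0 ≤ c i) ∧
      c 1 < c ⟨k - 1, Nat.sub_lt hk one_pos⟩ ∧
      ∀ i : Fin k, getLabel E (c i) (c (i + 1)) = some (ℓ i)).card
  else 0

/-- The Poisson probability mass function. -/
noncomputable def poissonPMF (m : ℝ) (j : ℕ) : ℝ :=
  Real.exp (-m) * m ^ j / (Nat.factorial j)

/-- The mean cycle count `λ([ℓ]_k)` under the labeled Erdős–Rényi model. -/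
noncomputable def lamER [Fintype L] (a b : ℝ) (μ ν : L → ℝ) {k : ℕ} (ℓ : Fin k → L) : ℝ :=
  (1 / ((2 : ℝ) ^ (k + 1) * k)) * ∏ i, (a * μ (ℓ i) + b * ν (ℓ i))

/-- The mean cycle count `ξ([ℓ]_k)` under the labeled SBM. -/
noncomputable def xiSBM [Fintype L] (a b : ℝ) (μ ν : L → ℝ) {k : ℕ} (ℓ : Fin k → L) : ℝ :=
  (1 / ((2 : ℝ) ^ (k + 1) * k)) *
    (∏ i, (a * μ (ℓ i) + b * ν (ℓ i)) + ∏ i, (a * μ (ℓ i) - b * ν (ℓ i)))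

/-- The per-pair likelihood-ratio factor `W_{uv}(G, L, σ)` (SBM versus labeled
Erdős–Rényi), as a function of the pair status (`same` type or not) and the
edge/label information on the pair. -/
noncomputable def likPair (n : ℕ) (a b : ℝ) (μ ν : L → ℝ) (same : Bool) :
    Option L → ℝ
  | some ℓ =>
      if same then 2 * a * μ ℓ / (a * μ ℓ + b * ν ℓ)
      else 2 * b * ν ℓ / (a * μ ℓ + b * ν ℓ)
  | none =>
      if same then (1 - a / n) / (1 - (a + b) / (2 * n))
      else (1 - b / n) / (1 - (a + b) / (2 * n))

/-- The likelihood ratio `Y_n = ℙ_n / ℙ'_n` of the labeled SBM with respect to the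
labeled Erdős–Rényi model. -/
noncomputable def Ylik [Fintype L] (n : ℕ) (a b : ℝ) (μ ν : L → ℝ)
    (E : EdgeConf n L) : ℝ :=
  (1 / 2 : ℝ) ^ n * ∑ σ : Fin n → Bool,
    ∏ p : Pairs n, likPair n a b μ ν (σ p.1.1 == σ p.1.2) (E p)



section SecondMomentAux

variable {L : Type*} [Fintype L]

private lemma erExp_eval_aux (n : ℕ) (a b : ℝ) (μ ν : L → ℝ)
    (hsum : ∑ o : Option L, erPairMass n a b μ ν o = 1)
    (p₀ : Pairs n) (g : Option L → ℝ) :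
    erExp n a b μ ν (fun E => g (E p₀)) = ∑ o : Option L, erPairMass n a b μ ν o * g o := by
  classical
  unfold erExp erMass
  have key : ∀ E : EdgeConf n L,
      (∏ p, erPairMass n a b μ ν (E p)) * g (E p₀)
      = ∏ p : Pairs n, (erPairMass n a b μ ν (E p) * if p = p₀ then g (E p) else 1) := by
    intro E
    rw [Finset.prod_mul_distrib]
    congr 1
    simp
  simp_rw [key]
  have hps := Finset.prod_univ_sum (fun _ : Pairs n => (univ : Finset (Option L)))
    (fun p o => erPairMass n a b μ ν o * if p = p₀ then g o else 1)
  rw [Fintype.piFinset_univ] at hps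
  rw [← hps]
  rw [Finset.prod_eq_single p₀]
  · simp
  · intro p _ hp
    simp [hp, hsum]
  · simp

private lemma erPairMass_sum_aux {a b : ℝ} (ha : 0 < a) (hb : 0 < b) {μ ν : L → ℝ}
    (hμ : IsProbVec μ) (hν : IsProbVec ν) (n : ℕ) :
    ∑ o : Option L, erPairMass n a b μ ν o = 1 := by
  rw [Fintype.sum_option]
  have hab : a + b ≠ 0 := by positivity
  have h2 : ∑ ℓ, erPairMass n a b μ ν (some ℓ) = (a + b) / (2 * n) := by
    simp only [erPairMass]
    rw [← Finset.mul_sum]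
    have h1 : ∑ ℓ, (a * μ ℓ + b * ν ℓ) / (a + b) = 1 := by
      rw [← Finset.sum_div, Finset.sum_add_distrib, ← Finset.mul_sum, ← Finset.mul_sum,
        hμ.2, hν.2]
      field_simp
    rw [h1, mul_one]
  rw [h2]
  simp [erPairMass]

private lemma sum_lemmas_aux (a b : ℝ) (ha : 0 < a) (hb : 0 < b)
    (μ ν : L → ℝ) (hμ : IsProbVec μ) (hν : IsProbVec ν) :
    (∑ ℓ, (a * μ ℓ + b * ν ℓ) * (2 * a * μ ℓ / (a * μ ℓ + b * ν ℓ) * (2 * a * μ ℓ / (a * μ ℓ + b * ν ℓ)))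
      = (a + b) + 2 * (a - b) + 2 * tau a b μ ν) ∧
    (∑ ℓ, (a * μ ℓ + b * ν ℓ) * (2 * b * ν ℓ / (a * μ ℓ + b * ν ℓ) * (2 * b * ν ℓ / (a * μ ℓ + b * ν ℓ)))
      = (a + b) - 2 * (a - b) + 2 * tau a b μ ν) ∧
    (∑ ℓ, (a * μ ℓ + b * ν ℓ) * (2 * a * μ ℓ / (a * μ ℓ + b * ν ℓ) * (2 * b * ν ℓ / (a * μ ℓ + b * ν ℓ)))
      = (a + b) - 2 * tau a b μ ν) ∧
    (∑ ℓ, (a * μ ℓ + b * ν ℓ) * (2 * b * ν ℓ / (a * μ ℓ + b * ν ℓ) * (2 * a * μ ℓ / (a * μ ℓ + b * ν ℓ)))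
      = (a + b) - 2 * tau a b μ ν) := by
  have hdz : ∀ ℓ, a * μ ℓ + b * ν ℓ = 0 → a * μ ℓ = 0 ∧ b * ν ℓ = 0 := by
    intro ℓ h
    have h1 : 0 ≤ a * μ ℓ := mul_nonneg ha.le (hμ.1 ℓ)
    have h2 : 0 ≤ b * ν ℓ := mul_nonneg hb.le (hν.1 ℓ)
    constructor <;> linarith
  have hsumd : ∑ ℓ, (a * μ ℓ + b * ν ℓ) = a + b := by
    rw [Finset.sum_add_distrib, ← Finset.mul_sum, ← Finset.mul_sum, hμ.2, hν.2]; ring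
  have hsume : ∑ ℓ, (a * μ ℓ - b * ν ℓ) = a - b := by
    rw [Finset.sum_sub_distrib, ← Finset.mul_sum, ← Finset.mul_sum, hμ.2, hν.2]; ring
  have htau : ∑ ℓ, (a * μ ℓ - b * ν ℓ) ^ 2 / (a * μ ℓ + b * ν ℓ) = 2 * tau a b μ ν := by
    rw [tau, Finset.mul_sum]
    refine Finset.sum_congr rfl fun ℓ _ => ?_
    rcases eq_or_ne (a * μ ℓ + b * ν ℓ) 0 with h | h
    · obtain ⟨h1, h2⟩ := hdz ℓ h
      rw [h, h1, h2]; simp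
    · field_simp
  refine ⟨?_, ?_, ?_, ?_⟩
  · have per : ∀ ℓ ∈ univ, (a * μ ℓ + b * ν ℓ) * (2 * a * μ ℓ / (a * μ ℓ + b * ν ℓ) * (2 * a * μ ℓ / (a * μ ℓ + b * ν ℓ)))
        = (a * μ ℓ + b * ν ℓ) + 2 * (a * μ ℓ - b * ν ℓ) + (a * μ ℓ - b * ν ℓ) ^ 2 / (a * μ ℓ + b * ν ℓ) := by
      intro ℓ _
      rcases eq_or_ne (a * μ ℓ + b * ν ℓ) 0 with h | h
      · obtain ⟨h1, h2⟩ := hdz ℓ h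
        rw [h, h1, h2]; simp
      · field_simp; ring
    rw [Finset.sum_congr rfl per, Finset.sum_add_distrib, Finset.sum_add_distrib,
      ← Finset.mul_sum, hsumd, hsume, htau]
  · have per : ∀ ℓ ∈ univ, (a * μ ℓ + b * ν ℓ) * (2 * b * ν ℓ / (a * μ ℓ + b * ν ℓ) * (2 * b * ν ℓ / (a * μ ℓ + b * ν ℓ)))
        = (a * μ ℓ + b * ν ℓ) - 2 * (a * μ ℓ - b * ν ℓ) + (a * μ ℓ - b * ν ℓ) ^ 2 / (a * μ ℓ + b * ν ℓ) := by
      intro ℓ _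
      rcases eq_or_ne (a * μ ℓ + b * ν ℓ) 0 with h | h
      · obtain ⟨h1, h2⟩ := hdz ℓ h
        rw [h, h1, h2]; simp
      · field_simp; ring
    rw [Finset.sum_congr rfl per, Finset.sum_add_distrib, Finset.sum_sub_distrib,
      ← Finset.mul_sum, hsumd, hsume, htau]
  · have per : ∀ ℓ ∈ univ, (a * μ ℓ + b * ν ℓ) * (2 * a * μ ℓ / (a * μ ℓ + b * ν ℓ) * (2 * b * ν ℓ / (a * μ ℓ + b * ν ℓ)))
        = (a * μ ℓ + b * ν ℓ) - (a * μ ℓ - b * ν ℓ) ^ 2 / (a * μ ℓ + b * ν ℓ) := by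
      intro ℓ _
      rcases eq_or_ne (a * μ ℓ + b * ν ℓ) 0 with h | h
      · obtain ⟨h1, h2⟩ := hdz ℓ h
        rw [h, h1, h2]; simp
      · field_simp; ring
    rw [Finset.sum_congr rfl per, Finset.sum_sub_distrib, hsumd, htau]
  · have per : ∀ ℓ ∈ univ, (a * μ ℓ + b * ν ℓ) * (2 * b * ν ℓ / (a * μ ℓ + b * ν ℓ) * (2 * a * μ ℓ / (a * μ ℓ + b * ν ℓ)))
        = (a * μ ℓ + b * ν ℓ) - (a * μ ℓ - b * ν ℓ) ^ 2 / (a * μ ℓ + b * ν ℓ) := by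
      intro ℓ _
      rcases eq_or_ne (a * μ ℓ + b * ν ℓ) 0 with h | h
      · obtain ⟨h1, h2⟩ := hdz ℓ h
        rw [h, h1, h2]; simp
      · field_simp; ring
    rw [Finset.sum_congr rfl per, Finset.sum_sub_distrib, hsumd, htau]

private lemma alg_tt_aux (x q A t S : ℝ) (hx : x ≠ 0) (hq : q ≠ 0) (hS : S = 2*x*(1-q)) :
    q * ((q - A/(2*x))/q * ((q - A/(2*x))/q)) + (S + 2*A + 2*t)/(2*x) - (1 + t/x + A^2/(4*x^2))
    = S*A^2/(8*x^3*q) := by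
  subst hS; field_simp; ring

private lemma alg_ff_aux (x q A t S : ℝ) (hx : x ≠ 0) (hq : q ≠ 0) (hS : S = 2*x*(1-q)) :
    q * ((q + A/(2*x))/q * ((q + A/(2*x))/q)) + (S - 2*A + 2*t)/(2*x) - (1 + t/x + A^2/(4*x^2))
    = S*A^2/(8*x^3*q) := by
  subst hS; field_simp; ring

private lemma alg_tf_aux (x q A t S : ℝ) (hx : x ≠ 0) (hq : q ≠ 0) (hS : S = 2*x*(1-q)) :
    q * ((q - A/(2*x))/q * ((q + A/(2*x))/q)) + (S - 2*t)/(2*x) - (1 - t/x - A^2/(4*x^2))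
    = -(S*A^2/(8*x^3*q)) := by
  subst hS; field_simp; ring

private lemma alg_ft_aux (x q A t S : ℝ) (hx : x ≠ 0) (hq : q ≠ 0) (hS : S = 2*x*(1-q)) :
    q * ((q + A/(2*x))/q * ((q - A/(2*x))/q)) + (S - 2*t)/(2*x) - (1 - t/x - A^2/(4*x^2))
    = -(S*A^2/(8*x^3*q)) := by
  subst hS; field_simp; ring

private lemma main_est_aux (a b : ℝ) (ha : 0 < a) (hb : 0 < b)
    (μ ν : L → ℝ) (hμ : IsProbVec μ) (hν : IsProbVec ν) (n : ℕ) (hn : 0 < n)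
    (hN : a + b ≤ (n : ℝ)) (s₁ s₂ : Bool) :
    |(∑ o : Option L, erPairMass n a b μ ν o * (likPair n a b μ ν s₁ o * likPair n a b μ ν s₂ o)) -
      (if s₁ = s₂ then 1 + tau a b μ ν / n + (a - b) ^ 2 / (4 * (n:ℝ) ^ 2)
        else 1 - tau a b μ ν / n - (a - b) ^ 2 / (4 * (n:ℝ) ^ 2))|
    ≤ ((a + b) * (a - b) ^ 2 / 4) / (n:ℝ) ^ 3 := by
  have hn' : (0:ℝ) < n := by exact_mod_cast hn
  have hx : (n:ℝ) ≠ 0 := hn'.ne'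
  have hab : (0:ℝ) < a + b := by linarith
  have hp : (a+b)/(2*(n:ℝ)) ≤ 1/2 := by
    rw [div_le_iff₀ (by positivity)]; linarith
  have h1p : (0:ℝ) < 1 - (a+b)/(2*(n:ℝ)) := by linarith
  have hq : (1:ℝ) - (a+b)/(2*(n:ℝ)) ≠ 0 := h1p.ne'
  have hmass : ∀ ℓ, erPairMass n a b μ ν (some ℓ) = (a * μ ℓ + b * ν ℓ) / (2 * (n:ℝ)) := by
    intro ℓ
    show ((a+b)/(2*(n:ℝ))) * ((a * μ ℓ + b * ν ℓ)/(a+b)) = _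
    field_simp
  obtain ⟨Stt, Sff, Stf, Sft⟩ := sum_lemmas_aux a b ha hb μ ν hμ hν
  have e1 : (1:ℝ) - a/(n:ℝ) = 1 - (a+b)/(2*(n:ℝ)) - (a-b)/(2*(n:ℝ)) := by
    field_simp; ring
  have e2 : (1:ℝ) - b/(n:ℝ) = 1 - (a+b)/(2*(n:ℝ)) + (a-b)/(2*(n:ℝ)) := by
    field_simp; ring
  have hS : a + b = 2*(n:ℝ)*(1 - (1 - (a+b)/(2*(n:ℝ)))) := by
    field_simp
    ring
  have hfinal : 0 ≤ (a+b)*(a-b)^2/(8*(n:ℝ)^3*(1 - (a+b)/(2*(n:ℝ)))) := by positivity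
  have hbound : (a+b)*(a-b)^2/(8*(n:ℝ)^3*(1 - (a+b)/(2*(n:ℝ)))) ≤ ((a+b)*(a-b)^2/4)/(n:ℝ)^3 := by
    rw [div_div]
    rw [div_le_div_iff₀ (by positivity) (by positivity)]
    have h8 : 4*(n:ℝ)^3 ≤ 8*(n:ℝ)^3*(1-(a+b)/(2*(n:ℝ))) := by
      nlinarith [mul_nonneg (by linarith : (0:ℝ) ≤ 1 - (a+b)/(2*(n:ℝ)) - 1/2) (pow_pos hn' 3).le]
    nlinarith [mul_nonneg (mul_nonneg hab.le (sq_nonneg (a-b))) (sub_nonneg.mpr h8)]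
  rw [Fintype.sum_option]
  have hnone : erPairMass n a b μ ν none = 1 - (a+b)/(2*(n:ℝ)) := rfl
  cases s₁ <;> cases s₂
  · -- ff
    have Lff : ∑ ℓ, erPairMass n a b μ ν (some ℓ) *
        (likPair n a b μ ν false (some ℓ) * likPair n a b μ ν false (some ℓ))
        = ((a+b) - 2*(a-b) + 2*tau a b μ ν)/(2*(n:ℝ)) := by
      rw [← Sff, Finset.sum_div]
      refine Finset.sum_congr rfl fun ℓ _ => ?_
      rw [hmass ℓ, show likPair n a b μ ν false (some ℓ) = 2 * b * ν ℓ / (a * μ ℓ + b * ν ℓ) from rfl]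
      ring
    rw [if_pos rfl, Lff, hnone,
      show likPair n a b μ ν false none = (1 - b/(n:ℝ))/(1 - (a+b)/(2*(n:ℝ))) from rfl, e2]
    rw [alg_ff_aux (n:ℝ) (1 - (a+b)/(2*(n:ℝ))) (a-b) (tau a b μ ν) (a+b) hx hq hS]
    rw [abs_of_nonneg hfinal]
    exact hbound
  · -- ft
    have Lft : ∑ ℓ, erPairMass n a b μ ν (some ℓ) *
        (likPair n a b μ ν false (some ℓ) * likPair n a b μ ν true (some ℓ))
        = ((a+b) - 2*tau a b μ ν)/(2*(n:ℝ)) := by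
      rw [← Sft, Finset.sum_div]
      refine Finset.sum_congr rfl fun ℓ _ => ?_
      rw [hmass ℓ, show likPair n a b μ ν false (some ℓ) = 2 * b * ν ℓ / (a * μ ℓ + b * ν ℓ) from rfl, show likPair n a b μ ν true (some ℓ) = 2 * a * μ ℓ / (a * μ ℓ + b * ν ℓ) from rfl]
      ring
    rw [if_neg (by simp), Lft, hnone,
      show likPair n a b μ ν false none = (1 - b/(n:ℝ))/(1 - (a+b)/(2*(n:ℝ))) from rfl,
      show likPair n a b μ ν true none = (1 - a/(n:ℝ))/(1 - (a+b)/(2*(n:ℝ))) from rfl, e1, e2]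
    rw [alg_ft_aux (n:ℝ) (1 - (a+b)/(2*(n:ℝ))) (a-b) (tau a b μ ν) (a+b) hx hq hS]
    rw [abs_neg, abs_of_nonneg hfinal]
    exact hbound
  · -- tf
    have Ltf : ∑ ℓ, erPairMass n a b μ ν (some ℓ) *
        (likPair n a b μ ν true (some ℓ) * likPair n a b μ ν false (some ℓ))
        = ((a+b) - 2*tau a b μ ν)/(2*(n:ℝ)) := by
      rw [← Stf, Finset.sum_div]
      refine Finset.sum_congr rfl fun ℓ _ => ?_
      rw [hmass ℓ, show likPair n a b μ ν false (some ℓ) = 2 * b * ν ℓ / (a * μ ℓ + b * ν ℓ) from rfl, show likPair n a b μ ν true (some ℓ) = 2 * a * μ ℓ / (a * μ ℓ + b * ν ℓ) from rfl]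
      ring
    rw [if_neg (by simp), Ltf, hnone,
      show likPair n a b μ ν false none = (1 - b/(n:ℝ))/(1 - (a+b)/(2*(n:ℝ))) from rfl,
      show likPair n a b μ ν true none = (1 - a/(n:ℝ))/(1 - (a+b)/(2*(n:ℝ))) from rfl, e1, e2]
    rw [alg_tf_aux (n:ℝ) (1 - (a+b)/(2*(n:ℝ))) (a-b) (tau a b μ ν) (a+b) hx hq hS]
    rw [abs_neg, abs_of_nonneg hfinal]
    exact hbound
  · -- tt
    have Ltt : ∑ ℓ, erPairMass n a b μ ν (some ℓ) *
        (likPair n a b μ ν true (some ℓ) * likPair n a b μ ν true (some ℓ))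
        = ((a+b) + 2*(a-b) + 2*tau a b μ ν)/(2*(n:ℝ)) := by
      rw [← Stt, Finset.sum_div]
      refine Finset.sum_congr rfl fun ℓ _ => ?_
      rw [hmass ℓ, show likPair n a b μ ν true (some ℓ) = 2 * a * μ ℓ / (a * μ ℓ + b * ν ℓ) from rfl]
      ring
    rw [if_pos rfl, Ltt, hnone,
      show likPair n a b μ ν true none = (1 - a/(n:ℝ))/(1 - (a+b)/(2*(n:ℝ))) from rfl, e1]
    rw [alg_tt_aux (n:ℝ) (1 - (a+b)/(2*(n:ℝ))) (a-b) (tau a b μ ν) (a+b) hx hq hS]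
    rw [abs_of_nonneg hfinal]
    exact hbound

end SecondMomentAux

set_option maxHeartbeats 2000000 in
/-- **Lemma (Second-moment computation, Lemma 3).**
Under the labeled Erdős–Rényi distribution `ℙ'_n`, for a pair `u < v` and type
assignments `σ, δ ∈ {±1}^n`: if `σ_u σ_v = δ_u δ_v` then
`E[W_{uv}(σ) W_{uv}(δ)] = 1 + τ/n + (a-b)²/(4n²) + O(n⁻³)`, and otherwise
`E[W_{uv}(σ) W_{uv}(δ)] = 1 - τ/n - (a-b)²/(4n²) + O(n⁻³)`. -/
theorem second_moment_pair
    {L : Type*} [Fintype L] (a b : ℝ) (ha : 0 < a) (hb : 0 < b)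
    (μ ν : L → ℝ) (hμ : IsProbVec μ) (hν : IsProbVec ν) :
    ∃ C : ℝ, ∀ (n : ℕ), 0 < n → ∀ (u v : Fin n), u < v →
      ∀ σ δ : Fin n → Bool,
        (((σ u = σ v) ↔ (δ u = δ v)) →
          |erExp n a b μ ν (fun E =>
              likPair n a b μ ν (σ u == σ v) (getLabel E u v) *
              likPair n a b μ ν (δ u == δ v) (getLabel E u v)) -
            (1 + tau a b μ ν / n + (a - b) ^ 2 / (4 * (n : ℝ) ^ 2))| ≤ C / (n : ℝ) ^ 3) ∧
        (¬((σ u = σ v) ↔ (δ u = δ v)) →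
          |erExp n a b μ ν (fun E =>
              likPair n a b μ ν (σ u == σ v) (getLabel E u v) *
              likPair n a b μ ν (δ u == δ v) (getLabel E u v)) -
            (1 - tau a b μ ν / n - (a - b) ^ 2 / (4 * (n : ℝ) ^ 2))| ≤ C / (n : ℝ) ^ 3) := by
  classical
  set Tf : ℕ → Bool → Bool → ℝ := fun n s₁ s₂ =>
    if s₁ = s₂ then 1 + tau a b μ ν / n + (a - b) ^ 2 / (4 * (n : ℝ) ^ 2)
    else 1 - tau a b μ ν / n - (a - b) ^ 2 / (4 * (n : ℝ) ^ 2) with hTf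
  set Vf : ℕ → Bool → Bool → ℝ := fun n s₁ s₂ =>
    ∑ o : Option L, erPairMass n a b μ ν o *
      (likPair n a b μ ν s₁ o * likPair n a b μ ν s₂ o) with hVf
  refine ⟨(a + b) * (a - b) ^ 2 / 4 +
    ∑ m ∈ Finset.range ⌈a + b⌉₊, ∑ s : Bool × Bool, (m : ℝ) ^ 3 * |Vf m s.1 s.2 - Tf m s.1 s.2|,
    ?_⟩
  intro n hn u v huv σ δ
  have hn' : (0:ℝ) < n := by exact_mod_cast hn
  have hC0 : (0:ℝ) ≤ (a + b) * (a - b) ^ 2 / 4 := by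
    have : (0:ℝ) ≤ a + b := by linarith
    positivity
  have hS0 : (0:ℝ) ≤
      ∑ m ∈ Finset.range ⌈a + b⌉₊, ∑ s : Bool × Bool, (m : ℝ) ^ 3 * |Vf m s.1 s.2 - Tf m s.1 s.2| :=
    Finset.sum_nonneg fun m _ => Finset.sum_nonneg fun s _ =>
      mul_nonneg (by positivity) (abs_nonneg _)
  have hbound : ∀ s₁ s₂ : Bool, |Vf n s₁ s₂ - Tf n s₁ s₂| ≤
      ((a + b) * (a - b) ^ 2 / 4 +
        ∑ m ∈ Finset.range ⌈a + b⌉₊, ∑ s : Bool × Bool,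
          (m : ℝ) ^ 3 * |Vf m s.1 s.2 - Tf m s.1 s.2|) / (n : ℝ) ^ 3 := by
    intro s₁ s₂
    rcases le_or_gt (a + b) (n : ℝ) with hcase | hcase
    · have h1 := main_est_aux a b ha hb μ ν hμ hν n hn hcase s₁ s₂
      refine h1.trans ?_
      gcongr
      linarith
    · have hmem : n ∈ Finset.range ⌈a + b⌉₊ :=
        Finset.mem_range.mpr (Nat.lt_ceil.mpr hcase)
      have step1 : (n : ℝ) ^ 3 * |Vf n s₁ s₂ - Tf n s₁ s₂| ≤
          ∑ s : Bool × Bool, (n : ℝ) ^ 3 * |Vf n s.1 s.2 - Tf n s.1 s.2| := by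
        refine Finset.single_le_sum (f := fun s : Bool × Bool =>
            (n : ℝ) ^ 3 * |Vf n s.1 s.2 - Tf n s.1 s.2|)
          (fun s _ => mul_nonneg (by positivity) (abs_nonneg _)) (Finset.mem_univ (s₁, s₂))
      have step2 : ∑ s : Bool × Bool, (n : ℝ) ^ 3 * |Vf n s.1 s.2 - Tf n s.1 s.2| ≤
          ∑ m ∈ Finset.range ⌈a + b⌉₊, ∑ s : Bool × Bool,
            (m : ℝ) ^ 3 * |Vf m s.1 s.2 - Tf m s.1 s.2| :=
        Finset.single_le_sum (f := fun m : ℕ => ∑ s : Bool × Bool,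
            (m : ℝ) ^ 3 * |Vf m s.1 s.2 - Tf m s.1 s.2|)
          (fun m _ => Finset.sum_nonneg fun s _ => mul_nonneg (by positivity) (abs_nonneg _))
          hmem
      rw [le_div_iff₀ (by positivity)]
      calc |Vf n s₁ s₂ - Tf n s₁ s₂| * (n : ℝ) ^ 3
          = (n : ℝ) ^ 3 * |Vf n s₁ s₂ - Tf n s₁ s₂| := by ring
        _ ≤ ∑ m ∈ Finset.range ⌈a + b⌉₊, ∑ s : Bool × Bool,
            (m : ℝ) ^ 3 * |Vf m s.1 s.2 - Tf m s.1 s.2| := step1.trans step2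
        _ ≤ _ := by linarith
  have herExp : erExp n a b μ ν (fun E =>
      likPair n a b μ ν (σ u == σ v) (getLabel E u v) *
      likPair n a b μ ν (δ u == δ v) (getLabel E u v)) = Vf n (σ u == σ v) (δ u == δ v) := by
    have hfun : (fun E : EdgeConf n L =>
        likPair n a b μ ν (σ u == σ v) (getLabel E u v) *
        likPair n a b μ ν (δ u == δ v) (getLabel E u v)) =
        (fun E : EdgeConf n L =>
          (fun o => likPair n a b μ ν (σ u == σ v) o * likPair n a b μ ν (δ u == δ v) o)
            (E ⟨(u, v), huv⟩)) := by
      funext E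
      simp [getLabel, huv]
    rw [hfun, erExp_eval_aux n a b μ ν (erPairMass_sum_aux ha hb hμ hν n) ⟨(u, v), huv⟩
      (fun o => likPair n a b μ ν (σ u == σ v) o * likPair n a b μ ν (δ u == δ v) o)]
  constructor
  · intro hiff
    have hs : (σ u == σ v) = (δ u == δ v) := by
      rcases Bool.eq_false_or_eq_true (σ u == σ v) with h1 | h1 <;>
        rcases Bool.eq_false_or_eq_true (δ u == δ v) with h2 | h2 <;>
          simp_all
    have hTeq : Tf n (σ u == σ v) (δ u == δ v) =
        1 + tau a b μ ν / n + (a - b) ^ 2 / (4 * (n : ℝ) ^ 2) := by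
      simp only [hTf]
      rw [if_pos hs]
    rw [herExp, ← hTeq]
    exact hbound _ _
  · intro hiff
    have hs : (σ u == σ v) ≠ (δ u == δ v) := by
      rcases Bool.eq_false_or_eq_true (σ u == σ v) with h1 | h1 <;>
        rcases Bool.eq_false_or_eq_true (δ u == δ v) with h2 | h2 <;>
          simp_all
    have hTeq : Tf n (σ u == σ v) (δ u == δ v) =
        1 - tau a b μ ν / n - (a - b) ^ 2 / (4 * (n : ℝ) ^ 2) := by
      simp only [hTf]
      rw [if_neg hs]
    rw [herExp, ← hTeq]
    exact hbound _ _


end LSBM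
end

section
/- Let x, y ∈ ℝ^n with ‖x‖ = ‖y‖ = 1 and xᵀy ≥ 0, let α, β ∈ ℝ, and set M = α·x·xᵀ and M' = β·y·yᵀ. Then ‖x − y‖ ≤ (√2 / max{|α|, |β|})·‖M − M'‖, where the matrix norm is the spectral norm. -/
open Finset Filter Real

namespace LSBM

variable {L : Type*}

lemma dk_aux {n : ℕ} (x y : Fin n → ℝ)
    (hx : ∑ i, x i ^ 2 = 1) (hy : ∑ i, y i ^ 2 = 1) (α β : ℝ) :
    |α| * Real.sqrt (1 - (∑ i, x i * y i) ^ 2) ≤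
      specNorm (α • Matrix.vecMulVec x x - β • Matrix.vecMulVec y y) := by
  set s : ℝ := ∑ i, x i * y i with hs
  have hs2 : s ^ 2 ≤ 1 := by
    have := Finset.sum_mul_sq_le_sq_mul_sq Finset.univ x y
    simpa [hx, hy] using this
  set c : ℝ := Real.sqrt (1 - s ^ 2) with hcdef
  have hc2 : c ^ 2 = 1 - s ^ 2 := Real.sq_sqrt (by linarith)
  have hc0 : 0 ≤ c := Real.sqrt_nonneg _
  set A : Matrix (Fin n) (Fin n) ℝ :=
    α • Matrix.vecMulVec x x - β • Matrix.vecMulVec y y with hA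
  rcases eq_or_lt_of_le hc0 with hc | hc
  · rw [← hc, mul_zero]
    exact norm_nonneg _
  · set z : Fin n → ℝ := fun i => c⁻¹ * (x i - s * y i) with hz
    have hxz : ∑ i, x i * z i = c := by
      have h1 : ∀ i, x i * z i = c⁻¹ * (x i ^ 2 - s * (x i * y i)) := by
        intro i; simp only [hz]; ring
      simp_rw [h1, ← Finset.mul_sum, Finset.sum_sub_distrib, ← Finset.mul_sum, hx, ← hs]
      field_simp
      nlinarith [hc2]
    have hyz : ∑ i, y i * z i = 0 := by
      have h1 : ∀ i, y i * z i = c⁻¹ * (x i * y i - s * y i ^ 2) := by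
        intro i; simp only [hz]; ring
      simp_rw [h1, ← Finset.mul_sum, Finset.sum_sub_distrib, ← Finset.mul_sum, hy, ← hs]
      simp
    have hzz : ∑ i, z i ^ 2 = 1 := by
      have h1 : ∀ i, z i ^ 2 = c⁻¹ ^ 2 * (x i ^ 2 - 2 * s * (x i * y i) + s ^ 2 * y i ^ 2) := by
        intro i; simp only [hz]; ring
      simp_rw [h1, ← Finset.mul_sum, Finset.sum_add_distrib, Finset.sum_sub_distrib,
        ← Finset.mul_sum, hx, hy, ← hs]
      field_simp
      nlinarith [hc2]
    have hAz : Matrix.mulVec A z = fun u => α * c * x u := by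
      funext u
      have : Matrix.mulVec A z u = α * x u * (∑ i, x i * z i) - β * y u * (∑ i, y i * z i) := by
        simp only [hA, Matrix.mulVec, dotProduct, Matrix.sub_apply, Matrix.smul_apply,
          Matrix.vecMulVec_apply, Finset.mul_sum, ← Finset.sum_sub_distrib, smul_eq_mul]
        exact Finset.sum_congr rfl fun i _ => by ring
      rw [this, hxz, hyz]
      ring
    -- operator norm bound
    have key := (Matrix.toEuclideanCLM (𝕜 := ℝ) A).le_opNorm
      ((WithLp.equiv 2 (Fin n → ℝ)).symm z)
    have hnz : ‖(WithLp.equiv 2 (Fin n → ℝ)).symm z‖ = 1 := by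
      rw [EuclideanSpace.norm_eq]
      simp only [WithLp.equiv_symm_apply, WithLp.ofLp_toLp, Real.norm_eq_abs, sq_abs]
      rw [hzz, Real.sqrt_one]
    have happ : ‖Matrix.toEuclideanCLM (𝕜 := ℝ) A ((WithLp.equiv 2 (Fin n → ℝ)).symm z)‖
        = |α| * c := by
      rw [WithLp.equiv_symm_apply, Matrix.toEuclideanCLM_toLp, EuclideanSpace.norm_eq]
      simp only [WithLp.ofLp_toLp, Matrix.toLin'_apply, Real.norm_eq_abs, sq_abs]
      rw [hAz]
      have : ∀ u : Fin n, (α * c * x u) ^ 2 = (α * c) ^ 2 * x u ^ 2 := fun u => by ring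
      simp_rw [this, ← Finset.mul_sum, hx, mul_one, Real.sqrt_sq_eq_abs, abs_mul,
        abs_of_nonneg hc0]
    rw [happ, hnz, mul_one] at key
    exact key

lemma specNorm_neg {n : ℕ} (M : Matrix (Fin n) (Fin n) ℝ) :
    specNorm (-M) = specNorm M := by
  unfold specNorm
  rw [map_neg, norm_neg]

/-- **Lemma (Davis–Kahan sin θ, rank-one case, Lemma 6, first part).**
If `‖x‖ = ‖y‖ = 1`, `xᵀy ≥ 0`, `M = α xxᵀ` and `M' = β yyᵀ`, then
`‖x − y‖ ≤ (√2 / max(|α|, |β|)) ‖M − M'‖` in spectral norm. -/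
theorem davis_kahan_rank_one
    {n : ℕ} (x y : Fin n → ℝ)
    (hx : ∑ i, x i ^ 2 = 1) (hy : ∑ i, y i ^ 2 = 1)
    (hxy : 0 ≤ ∑ i, x i * y i)
    (α β : ℝ) (hαβ : 0 < max |α| |β|) :
    Real.sqrt (∑ i, (x i - y i) ^ 2) ≤
      Real.sqrt 2 / max |α| |β| *
        specNorm (α • Matrix.vecMulVec x x - β • Matrix.vecMulVec y y) := by
  set s : ℝ := ∑ i, x i * y i with hs
  have hs2 : s ^ 2 ≤ 1 := by
    have := Finset.sum_mul_sq_le_sq_mul_sq Finset.univ x y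
    simpa [hx, hy] using this
  have hs1 : s ≤ 1 := by nlinarith
  set N : ℝ := specNorm (α • Matrix.vecMulVec x x - β • Matrix.vecMulVec y y) with hN
  have h1 : |α| * Real.sqrt (1 - s ^ 2) ≤ N := dk_aux x y hx hy α β
  have h2 : |β| * Real.sqrt (1 - s ^ 2) ≤ N := by
    have h := dk_aux y x hy hx β α
    have hcomm : ∑ i, y i * x i = s := by
      rw [hs]; exact Finset.sum_congr rfl fun i _ => mul_comm _ _
    rw [hcomm] at h
    have hneg : β • Matrix.vecMulVec y y - α • Matrix.vecMulVec x x =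
        -(α • Matrix.vecMulVec x x - β • Matrix.vecMulVec y y) := (neg_sub _ _).symm
    rw [hneg, specNorm_neg] at h
    exact h
  have hmax : max |α| |β| * Real.sqrt (1 - s ^ 2) ≤ N := by
    rcases max_cases |α| |β| with ⟨h, _⟩ | ⟨h, _⟩ <;> rw [h] <;> assumption
  have hsqle : Real.sqrt (1 - s) ≤ Real.sqrt (1 - s ^ 2) :=
    Real.sqrt_le_sqrt (by nlinarith)
  have hmax2 : max |α| |β| * Real.sqrt (1 - s) ≤ N :=
    le_trans (by nlinarith [hαβ.le]) hmax
  have hLHS : ∑ i, (x i - y i) ^ 2 = 2 - 2 * s := by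
    have h1 : ∀ i, (x i - y i) ^ 2 = x i ^ 2 + y i ^ 2 - 2 * (x i * y i) := fun i => by ring
    simp_rw [h1, Finset.sum_sub_distrib, Finset.sum_add_distrib, ← Finset.mul_sum,
      hx, hy, ← hs]
    ring
  rw [hLHS]
  have h2s : (2 : ℝ) - 2 * s = 2 * (1 - s) := by ring
  rw [h2s, Real.sqrt_mul (by norm_num)]
  have hsqrt2 : (0 : ℝ) ≤ Real.sqrt 2 := Real.sqrt_nonneg _
  rw [div_mul_eq_mul_div, le_div_iff₀ hαβ]
  calc Real.sqrt 2 * Real.sqrt (1 - s) * max |α| |β|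
      = Real.sqrt 2 * (max |α| |β| * Real.sqrt (1 - s)) := by ring
    _ ≤ Real.sqrt 2 * N := by
        apply mul_le_mul_of_nonneg_left hmax2 hsqrt2


end LSBM
end

section
/- Let x, y ∈ ℝ^n with ‖x‖ = ‖y‖ = 1 and xᵀy ≥ 0, let α, β ∈ ℝ with max{|α|, |β|} > 0, and set M = α·x·xᵀ and M' = β·y·yᵀ. Let M̃ be an n×n real matrix such that M' is a best rank-1 approximation of M̃ in spectral norm, i.e., ‖M̃ − M'‖ ≤ ‖M̃ − N‖ for every n×n matrix N of rank at most 1. Then ‖x − y‖ ≤ (2√2 / max{|α|, |β|})·‖M − M̃‖. -/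
open Finset Filter Real

namespace LSBM

variable {L : Type*}

/-- **Lemma (Davis–Kahan sin θ, rank-one case, Lemma 6, second part).**
If `‖x‖ = ‖y‖ = 1`, `xᵀy ≥ 0`, `M = α xxᵀ`, `M' = β yyᵀ`, and `M'` is a best rank-one
approximation of `M̃` in spectral norm, then
`‖x − y‖ ≤ (2√2 / max(|α|, |β|)) ‖M − M̃‖`. -/
theorem davis_kahan_rank_one_approx
    {n : ℕ} (x y : Fin n → ℝ)
    (hx : ∑ i, x i ^ 2 = 1) (hy : ∑ i, y i ^ 2 = 1)
    (hxy : 0 ≤ ∑ i, x i * y i)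
    (α β : ℝ) (hαβ : 0 < max |α| |β|)
    (Mt : Matrix (Fin n) (Fin n) ℝ)
    (hbest : ∀ N : Matrix (Fin n) (Fin n) ℝ, N.rank ≤ 1 →
      specNorm (Mt - β • Matrix.vecMulVec y y) ≤ specNorm (Mt - N)) :
    Real.sqrt (∑ i, (x i - y i) ^ 2) ≤
      2 * Real.sqrt 2 / max |α| |β| *
        specNorm (α • Matrix.vecMulVec x x - Mt) := by
  classical
  set m := max |α| |β| with hm
  set ε := specNorm (α • Matrix.vecMulVec x x - Mt) with hε
  set t := ∑ i, x i * y i with ht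
  clear_value t
  have hεnn : 0 ≤ ε := norm_nonneg _
  -- sum identity
  have hsum : ∑ i, (x i - y i) ^ 2 = 2 - 2 * t := by
    have h1 : ∀ i ∈ Finset.univ, (x i - y i) ^ 2
        = x i ^ 2 + y i ^ 2 - 2 * (x i * y i) := fun i _ => by ring
    rw [Finset.sum_congr rfl h1, Finset.sum_sub_distrib, Finset.sum_add_distrib,
      ← Finset.mul_sum, hx, hy, ← ht]
    ring
  by_cases htop : 1 ≤ t
  · have : ∑ i, (x i - y i) ^ 2 ≤ 0 := by rw [hsum]; linarith
    rw [Real.sqrt_eq_zero_of_nonpos this]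
    positivity
  push_neg at htop
  -- M' best approx: ‖Mt - βyy‖ ≤ ε
  have hrank : (α • Matrix.vecMulVec x x).rank ≤ 1 := by
    have h : α • Matrix.vecMulVec x x = Matrix.vecMulVec (α • x) x := by
      ext i j; simp [Matrix.vecMulVec, Matrix.smul_apply]; ring
    rw [h, Matrix.vecMulVec_eq (Fin 1)]
    exact (Matrix.rank_mul_le_right _ _).trans
      ((Matrix.rank_le_card_height _).trans (by simp))
  have h1 : specNorm (Mt - β • Matrix.vecMulVec y y) ≤ ε := by
    have := hbest _ hrank
    rwa [show specNorm (Mt - α • Matrix.vecMulVec x x) = ε by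
      rw [hε]; unfold specNorm
      rw [← neg_sub (α • Matrix.vecMulVec x x) Mt, map_neg, norm_neg]] at this
  set A := α • Matrix.vecMulVec x x - β • Matrix.vecMulVec y y with hA
  have h2 : specNorm A ≤ 2 * ε := by
    have heq : A = (α • Matrix.vecMulVec x x - Mt) + (Mt - β • Matrix.vecMulVec y y) := by
      rw [hA]; abel
    rw [heq]
    calc specNorm ((α • Matrix.vecMulVec x x - Mt) + (Mt - β • Matrix.vecMulVec y y))
        ≤ specNorm (α • Matrix.vecMulVec x x - Mt)
          + specNorm (Mt - β • Matrix.vecMulVec y y) := by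
          unfold specNorm; rw [map_add]; exact norm_add_le _ _
      _ ≤ 2 * ε := by rw [← hε]; linarith
  -- lower bound on specNorm A
  have ht0 : 0 ≤ t := hxy
  have htt : 0 < 1 - t ^ 2 := by nlinarith
  set s := Real.sqrt (1 - t ^ 2) with hs
  have hs0 : 0 < s := Real.sqrt_pos.2 htt
  have hs2 : s ^ 2 = 1 - t ^ 2 := Real.sq_sqrt htt.le
  -- helper: apply A to a vector
  have happly : ∀ v : Fin n → ℝ,
      Matrix.toEuclideanCLM (𝕜 := ℝ) A ((WithLp.equiv _ _).symm v) =
        (WithLp.equiv _ _).symm (A.mulVec v) := fun v => by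
    simp [Matrix.toEuclideanCLM_toLp, Matrix.toLin'_apply]
  have hnormv : ∀ v : Fin n → ℝ,
      ‖((WithLp.equiv 2 (Fin n → ℝ)).symm v : EuclideanSpace ℝ (Fin n))‖
        = Real.sqrt (∑ i, (v i)^2) := fun v => by
    rw [EuclideanSpace.norm_eq]; simp [Real.norm_eq_abs, sq_abs]
  -- key bound for a generic unit direction
  have key : ∀ γ : ℝ, ∀ v : Fin n → ℝ, (∑ i, (v i)^2 = 1 - t^2) →
      (A.mulVec v = fun j => γ * (1 - t^2) * x j) ∨
      (A.mulVec v = fun j => γ * (1 - t^2) * y j) →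
      |γ| * s ≤ specNorm A := by
    intro γ v hv hcase
    have hle := (Matrix.toEuclideanCLM (𝕜 := ℝ) A).le_opNorm
      ((WithLp.equiv 2 (Fin n → ℝ)).symm v)
    rw [happly, hnormv, hnormv, hv, ← hs] at hle
    have hAv : Real.sqrt (∑ i, (A.mulVec v i)^2) = |γ| * (1 - t^2) := by
      rcases hcase with h | h
      · rw [h]
        have : ∑ i, (γ * (1 - t^2) * x i)^2 = (γ * (1-t^2))^2 * ∑ i, x i ^2 := by
          rw [Finset.mul_sum]; exact Finset.sum_congr rfl fun i _ => by ring
        rw [this, hx, mul_one, Real.sqrt_sq_eq_abs, abs_mul, abs_of_pos htt]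
      · rw [h]
        have : ∑ i, (γ * (1 - t^2) * y i)^2 = (γ * (1-t^2))^2 * ∑ i, y i ^2 := by
          rw [Finset.mul_sum]; exact Finset.sum_congr rfl fun i _ => by ring
        rw [this, hy, mul_one, Real.sqrt_sq_eq_abs, abs_mul, abs_of_pos htt]
    rw [hAv] at hle
    have : |γ| * s * s ≤ specNorm A * s := by
      calc |γ| * s * s = |γ| * (1 - t^2) := by rw [mul_assoc, ← sq, hs2]
        _ ≤ specNorm A * s := hle
    exact le_of_mul_le_mul_right this hs0
  -- the two directions
  have hα : |α| * s ≤ specNorm A := by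
    apply key α (fun i => x i - t * y i)
    · have : ∀ i ∈ Finset.univ, (x i - t * y i)^2
          = x i^2 + t^2 * y i^2 - 2*t*(x i * y i) := fun i _ => by ring
      rw [Finset.sum_congr rfl this, Finset.sum_sub_distrib, Finset.sum_add_distrib,
        ← Finset.mul_sum, ← Finset.mul_sum, hx, hy, ← ht]
      ring
    · left
      funext j
      rw [hA]
      simp only [Matrix.sub_mulVec, Matrix.smul_mulVec, Pi.sub_apply, Pi.smul_apply,
        smul_eq_mul]
      have hxz : Matrix.mulVec (Matrix.vecMulVec x x) (fun i => x i - t * y i) j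
          = x j * (1 - t^2) := by
        simp only [Matrix.mulVec, Matrix.vecMulVec_apply, dotProduct]
        have e1 : ∑ k, x j * x k * (x k - t * y k)
            = x j * (∑ k, x k ^2) - (x j * t) * (∑ k, x k * y k) := by
          rw [Finset.mul_sum, Finset.mul_sum, ← Finset.sum_sub_distrib]
          exact Finset.sum_congr rfl fun k _ => by ring
        rw [e1, hx, ← ht]; ring
      have hyz : Matrix.mulVec (Matrix.vecMulVec y y) (fun i => x i - t * y i) j = 0 := by
        simp only [Matrix.mulVec, Matrix.vecMulVec_apply, dotProduct]
        have e1 : ∑ k, y j * y k * (x k - t * y k)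
            = y j * (∑ k, x k * y k) - (y j * t) * (∑ k, y k ^2) := by
          rw [Finset.mul_sum, Finset.mul_sum, ← Finset.sum_sub_distrib]
          exact Finset.sum_congr rfl fun k _ => by ring
        rw [e1, hy, ← ht]; ring
      rw [hxz, hyz]; ring
  have hβ : |β| * s ≤ specNorm A := by
    have hkey := key (-β) (fun i => y i - t * x i)
    rw [abs_neg] at hkey
    apply hkey
    · have : ∀ i ∈ Finset.univ, (y i - t * x i)^2
          = y i^2 + t^2 * x i^2 - 2*t*(x i * y i) := fun i _ => by ring
      rw [Finset.sum_congr rfl this, Finset.sum_sub_distrib, Finset.sum_add_distrib,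
        ← Finset.mul_sum, ← Finset.mul_sum, hx, hy, ← ht]
      ring
    · right
      funext j
      rw [hA]
      simp only [Matrix.sub_mulVec, Matrix.smul_mulVec, Pi.sub_apply, Pi.smul_apply,
        smul_eq_mul]
      have hxz : Matrix.mulVec (Matrix.vecMulVec x x) (fun i => y i - t * x i) j = 0 := by
        simp only [Matrix.mulVec, Matrix.vecMulVec_apply, dotProduct]
        have e1 : ∑ k, x j * x k * (y k - t * x k)
            = x j * (∑ k, x k * y k) - (x j * t) * (∑ k, x k ^2) := by
          rw [Finset.mul_sum, Finset.mul_sum, ← Finset.sum_sub_distrib]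
          exact Finset.sum_congr rfl fun k _ => by ring
        rw [e1, hx, ← ht]; ring
      have hyz : Matrix.mulVec (Matrix.vecMulVec y y) (fun i => y i - t * x i) j
          = y j * (1 - t^2) := by
        simp only [Matrix.mulVec, Matrix.vecMulVec_apply, dotProduct]
        have e1 : ∑ k, y j * y k * (y k - t * x k)
            = y j * (∑ k, y k ^2) - (y j * t) * (∑ k, x k * y k) := by
          rw [Finset.mul_sum, Finset.mul_sum, ← Finset.sum_sub_distrib]
          exact Finset.sum_congr rfl fun k _ => by ring
        rw [e1, hy, ← ht]; ring
      rw [hxz, hyz]; ring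
  have hms : m * s ≤ 2 * ε := by
    rcases max_cases |α| |β| with ⟨he, _⟩ | ⟨he, _⟩ <;> rw [hm, he]
    · exact hα.trans h2
    · exact hβ.trans h2
  -- conclude
  have h1t : Real.sqrt (1 - t) ≤ s := by
    apply Real.sqrt_le_sqrt; nlinarith
  have hfin : m * Real.sqrt (1 - t) ≤ 2 * ε :=
    le_trans (by nlinarith [Real.sqrt_nonneg (1 - t)]) hms
  rw [hsum, show (2 : ℝ) - 2 * t = 2 * (1 - t) by ring,
    Real.sqrt_mul (by norm_num : (0:ℝ) ≤ 2)]
  rw [div_mul_eq_mul_div, le_div_iff₀ hαβ]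
  calc Real.sqrt 2 * Real.sqrt (1 - t) * m
      = Real.sqrt 2 * (m * Real.sqrt (1 - t)) := by ring
    _ ≤ Real.sqrt 2 * (2 * ε) := by
        apply mul_le_mul_of_nonneg_left hfin (Real.sqrt_nonneg 2)
    _ = 2 * Real.sqrt 2 * ε := by ring


end LSBM
end

section
/- Let ε₁, …, ε_n be independent random variables, each uniformly distributed on {−1, +1}, and set Z_n = (ε₁ + ⋯ + ε_n)/√n. Then for every real τ with 0 < τ < 1, E[exp(τ·Z_n²/2)] → (1 − τ)^{−1/2} as n → ∞. -/
open Finset Filter Real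

namespace LSBM

variable {L : Type*}

lemma one_add_sq_half_le_cosh (x : ℝ) : 1 + x ^ 2 / 2 ≤ Real.cosh x := by
  have h2 : ∑ i ∈ Finset.range 2, x ^ (2 * i) / (Nat.factorial (2 * i) : ℝ) ≤ Real.cosh x := by
    refine sum_le_hasSum _ (fun i _ => ?_) (Real.hasSum_cosh x)
    have hx : (0:ℝ) ≤ x ^ (2 * i) := by rw [pow_mul]; positivity
    positivity
  simpa [Finset.sum_range_succ, Nat.factorial] using h2

open MeasureTheory in
lemma gauss_shift (a : ℝ) :
    Integrable (fun t : ℝ => Real.exp (a * t - t ^ 2 / 2)) ∧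
    ∫ t : ℝ, Real.exp (a * t - t ^ 2 / 2)
      = Real.sqrt (2 * π) * Real.exp (a ^ 2 / 2) := by
  have h : ∀ t : ℝ, a * t - t ^ 2 / 2 = a ^ 2 / 2 + -(1 / 2) * (t - a) ^ 2 := by
    intro t; ring
  have hb : (0:ℝ) < 1 / 2 := by norm_num
  have hint : Integrable (fun t : ℝ => Real.exp (-(1 / 2) * (t - a) ^ 2)) :=
    (integrable_exp_neg_mul_sq hb).comp_sub_right a
  constructor
  · have := hint.const_mul (Real.exp (a ^ 2 / 2))
    refine this.congr ?_
    filter_upwards with t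
    rw [h t, Real.exp_add]
  · calc ∫ t : ℝ, Real.exp (a * t - t ^ 2 / 2)
        = ∫ t : ℝ, Real.exp (a ^ 2 / 2) * Real.exp (-(1 / 2) * (t - a) ^ 2) := by
          congr 1; funext t; rw [h t, Real.exp_add]
      _ = Real.exp (a ^ 2 / 2) * ∫ t : ℝ, Real.exp (-(1 / 2) * (t - a) ^ 2) :=
          MeasureTheory.integral_const_mul _ _
      _ = Real.exp (a ^ 2 / 2) * ∫ t : ℝ, Real.exp (-(1 / 2) * t ^ 2) := by
          rw [integral_sub_right_eq_self (fun t : ℝ => Real.exp (-(1 / 2) * t ^ 2)) a]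
      _ = Real.sqrt (2 * π) * Real.exp (a ^ 2 / 2) := by
          rw [integral_gaussian]
          rw [mul_comm]
          congr 1
          rw [show π / (1 / 2 : ℝ) = 2 * π by ring]

open MeasureTheory in
lemma rademacher_key (n : ℕ) (c : ℝ) :
    (1 / 2 : ℝ) ^ n * ∑ ε : Fin n → Bool,
      Real.exp ((c * ∑ u, (if ε u then (1 : ℝ) else -1)) ^ 2 / 2)
    = (Real.sqrt (2 * π))⁻¹ *
      ∫ t : ℝ, Real.exp (-(t ^ 2) / 2) * (Real.cosh (c * t)) ^ n := by
  have hsq : (0:ℝ) < Real.sqrt (2 * π) := Real.sqrt_pos.2 (by positivity)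
  have h1 : ∀ S : ℝ, Real.exp ((c * S) ^ 2 / 2)
      = (Real.sqrt (2 * π))⁻¹ * ∫ t : ℝ, Real.exp (c * S * t - t ^ 2 / 2) := by
    intro S
    rw [(gauss_shift (c * S)).2, ← mul_assoc, inv_mul_cancel₀ hsq.ne', one_mul]
  have step1 : ∑ ε : Fin n → Bool,
      Real.exp ((c * ∑ u, (if ε u then (1 : ℝ) else -1)) ^ 2 / 2)
      = (Real.sqrt (2 * π))⁻¹ * ∑ ε : Fin n → Bool,
        ∫ t : ℝ, Real.exp (c * (∑ u, (if ε u then (1 : ℝ) else -1)) * t - t ^ 2 / 2) := by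
    rw [Finset.mul_sum]
    exact Finset.sum_congr rfl fun ε _ => h1 _
  have hint : ∀ ε : Fin n → Bool, Integrable (fun t : ℝ =>
      Real.exp (c * (∑ u, (if ε u then (1 : ℝ) else -1)) * t - t ^ 2 / 2)) :=
    fun ε => (gauss_shift _).1
  have step2 : ∑ ε : Fin n → Bool,
      ∫ t : ℝ, Real.exp (c * (∑ u, (if ε u then (1 : ℝ) else -1)) * t - t ^ 2 / 2)
      = ∫ t : ℝ, ∑ ε : Fin n → Bool,
        Real.exp (c * (∑ u, (if ε u then (1 : ℝ) else -1)) * t - t ^ 2 / 2) :=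
    (integral_finset_sum _ (fun ε _ => hint ε)).symm
  have step3 : ∀ t : ℝ, (1 / 2 : ℝ) ^ n * ∑ ε : Fin n → Bool,
      Real.exp (c * (∑ u, (if ε u then (1 : ℝ) else -1)) * t - t ^ 2 / 2)
      = Real.exp (-(t ^ 2) / 2) * (Real.cosh (c * t)) ^ n := by
    intro t
    have hterm : ∀ ε : Fin n → Bool,
        Real.exp (c * (∑ u, (if ε u then (1 : ℝ) else -1)) * t - t ^ 2 / 2)
        = Real.exp (-(t ^ 2) / 2) *
          ∏ u : Fin n, Real.exp (c * t * (if ε u then (1 : ℝ) else -1)) := by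
      intro ε
      rw [← Real.exp_sum, ← Real.exp_add]
      congr 1
      rw [← Finset.mul_sum]
      ring
    simp only [hterm]
    rw [← Finset.mul_sum, ← Fintype.prod_sum
      (f := fun (_ : Fin n) (b : Bool) => Real.exp (c * t * (if b then (1 : ℝ) else -1)))]
    have hb : ∑ b : Bool, Real.exp (c * t * (if b then (1 : ℝ) else -1))
        = 2 * Real.cosh (c * t) := by
      rw [Fintype.sum_bool, Real.cosh_eq]
      rw [if_pos rfl, if_neg (by simp)]
      rw [mul_one, show c * t * (-1 : ℝ) = -(c * t) by ring]
      ring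
    rw [Finset.prod_congr rfl (fun u _ => hb), Finset.prod_const, Finset.card_univ,
      Fintype.card_fin]
    rw [mul_pow]
    have : (1 / 2 : ℝ) ^ n * (Real.exp (-(t ^ 2) / 2) * ((2:ℝ) ^ n * Real.cosh (c * t) ^ n))
        = ((1 / 2 : ℝ) * 2) ^ n * (Real.exp (-(t ^ 2) / 2) * Real.cosh (c * t) ^ n) := by
      rw [mul_pow]; ring
    rw [this]; norm_num
  rw [step1, ← mul_assoc, mul_comm ((1 / 2 : ℝ) ^ n), mul_assoc, step2,
    ← MeasureTheory.integral_const_mul]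
  congr 1
  exact MeasureTheory.integral_congr_ae (Filter.Eventually.of_forall step3)

set_option maxHeartbeats 1000000 in
/-- **Lemma (Gaussian limit of the exponential moment).**
If `ε₁, …, ε_n` are i.i.d. Rademacher and `Z_n = (ε₁ + ⋯ + ε_n)/√n`, then for
`0 < τ < 1`, `E[exp(τ Z_n²/2)] → (1 − τ)^{−1/2}` as `n → ∞`. -/
theorem rademacher_exp_moment_limit (τ : ℝ) (h0 : 0 < τ) (h1 : τ < 1) :
    Filter.Tendsto (fun n : ℕ =>
      (1 / 2 : ℝ) ^ n * ∑ ε : Fin n → Bool,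
        Real.exp (τ *
          ((∑ u, (if ε u then (1 : ℝ) else -1)) / Real.sqrt n) ^ 2 / 2))
      Filter.atTop (nhds ((1 - τ) ^ (-(1 / 2 : ℝ)))) := by
  classical
  have hτ' : (0:ℝ) < 1 - τ := by linarith
  set c : ℕ → ℝ := fun n => Real.sqrt τ / Real.sqrt n with hc
  have hcsq : ∀ n : ℕ, (c n) ^ 2 = τ / n := by
    intro n
    rw [hc]
    rw [div_pow, Real.sq_sqrt h0.le, Real.sq_sqrt (Nat.cast_nonneg n)]
  have hE : ∀ n : ℕ, (1 / 2 : ℝ) ^ n * ∑ ε : Fin n → Bool,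
      Real.exp (τ * ((∑ u, (if ε u then (1 : ℝ) else -1)) / Real.sqrt n) ^ 2 / 2)
      = (Real.sqrt (2 * π))⁻¹ *
        ∫ t : ℝ, Real.exp (-(t ^ 2) / 2) * (Real.cosh (c n * t)) ^ n := by
    intro n
    rw [← rademacher_key n (c n)]
    congr 1
    refine Finset.sum_congr rfl fun ε _ => ?_
    congr 1
    rw [mul_pow, hcsq n, div_pow, Real.sq_sqrt (Nat.cast_nonneg n)]
    ring
  have hlim : Filter.Tendsto (fun n : ℕ =>
      ∫ t : ℝ, Real.exp (-(t ^ 2) / 2) * (Real.cosh (c n * t)) ^ n) Filter.atTop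
      (nhds (∫ t : ℝ, Real.exp (-((1 - τ) / 2) * t ^ 2))) := by
    apply MeasureTheory.tendsto_integral_of_dominated_convergence
      (fun t : ℝ => Real.exp (-((1 - τ) / 2) * t ^ 2))
    · intro n
      exact (Continuous.mul (by fun_prop) (by fun_prop)).aestronglyMeasurable
    · exact integrable_exp_neg_mul_sq (by linarith)
    · intro n
      filter_upwards with t
      have hch : (0:ℝ) < Real.cosh (c n * t) := Real.cosh_pos _
      rw [Real.norm_eq_abs, abs_of_nonneg (by positivity)]
      have hle : (Real.cosh (c n * t)) ^ n ≤ Real.exp ((c n * t) ^ 2 / 2) ^ n := by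
        exact pow_le_pow_left₀ hch.le (Real.cosh_le_exp_half_sq _) n
      have hnc : (n : ℝ) * ((c n * t) ^ 2 / 2) ≤ τ * t ^ 2 / 2 := by
        rw [mul_pow, hcsq n]
        rcases Nat.eq_zero_or_pos n with h | h
        · subst h; simp; positivity
        · have hn : (0:ℝ) < n := by exact_mod_cast h
          rw [show (n:ℝ) * (τ / n * t ^ 2 / 2) = τ * t ^ 2 / 2 * ((n:ℝ) / n) by ring,
            div_self hn.ne', mul_one]
      calc Real.exp (-(t ^ 2) / 2) * (Real.cosh (c n * t)) ^ n
          ≤ Real.exp (-(t ^ 2) / 2) * Real.exp ((c n * t) ^ 2 / 2) ^ n := by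
            exact mul_le_mul_of_nonneg_left hle (Real.exp_nonneg _)
        _ = Real.exp (-(t ^ 2) / 2 + (n : ℝ) * ((c n * t) ^ 2 / 2)) := by
            rw [← Real.exp_nat_mul, ← Real.exp_add]
        _ ≤ Real.exp (-((1 - τ) / 2) * t ^ 2) := by
            apply Real.exp_le_exp.2
            nlinarith [hnc]
    · filter_upwards with t
      have hcosh : Filter.Tendsto (fun n : ℕ => (Real.cosh (c n * t)) ^ n)
          Filter.atTop (nhds (Real.exp (τ * t ^ 2 / 2))) := by
        have hup : ∀ᶠ n : ℕ in Filter.atTop,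
            (Real.cosh (c n * t)) ^ n ≤ Real.exp (τ * t ^ 2 / 2) := by
          filter_upwards [Filter.eventually_ge_atTop 1] with n hn
          have hnpos : (0:ℝ) < n := by exact_mod_cast hn
          have h1 : (Real.cosh (c n * t)) ^ n ≤ Real.exp ((c n * t) ^ 2 / 2) ^ n :=
            pow_le_pow_left₀ (Real.cosh_pos _).le (Real.cosh_le_exp_half_sq _) n
          have h2 : Real.exp ((c n * t) ^ 2 / 2) ^ n = Real.exp (τ * t ^ 2 / 2) := by
            rw [← Real.exp_nat_mul, mul_pow, hcsq n]
            congr 1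
            field_simp
          rw [h2] at h1
          exact h1
        have hlow : ∀ᶠ n : ℕ in Filter.atTop,
            (1 + (τ * t ^ 2 / 2) / n) ^ n ≤ (Real.cosh (c n * t)) ^ n := by
          filter_upwards [Filter.eventually_ge_atTop 1] with n hn
          have hnpos : (0:ℝ) < n := by exact_mod_cast hn
          have key : 1 + (τ * t ^ 2 / 2) / n = 1 + (c n * t) ^ 2 / 2 := by
            rw [mul_pow, hcsq n]
            field_simp
          rw [key]
          refine pow_le_pow_left₀ (by positivity) ?_ n
          exact one_add_sq_half_le_cosh _
        exact tendsto_of_tendsto_of_tendsto_of_le_of_le'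
          (Real.tendsto_one_add_div_pow_exp (τ * t ^ 2 / 2)) tendsto_const_nhds hlow hup
      have := (tendsto_const_nhds
        (x := Real.exp (-(t ^ 2) / 2)) (f := Filter.atTop (α := ℕ))).mul hcosh
      convert this using 2
      rw [← Real.exp_add]
      congr 1
      ring
  have hfin : (Real.sqrt (2 * π))⁻¹ * ∫ t : ℝ, Real.exp (-((1 - τ) / 2) * t ^ 2)
      = (1 - τ) ^ (-(1 / 2 : ℝ)) := by
    rw [integral_gaussian]
    have hπ : (0:ℝ) < π := Real.pi_pos
    have h2π : (0:ℝ) < 2 * π := by positivity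
    have hne : Real.sqrt (2 * π) ≠ 0 := (Real.sqrt_pos.2 h2π).ne'
    rw [show π / ((1 - τ) / 2) = (2 * π) / (1 - τ) by
      rw [div_div_eq_mul_div]; ring]
    rw [Real.sqrt_div (by positivity) (1 - τ)]
    rw [Real.rpow_neg hτ'.le, ← Real.sqrt_eq_rpow]
    rw [div_eq_mul_inv, ← mul_assoc, inv_mul_cancel₀ hne, one_mul]
  have final := hlim.const_mul (Real.sqrt (2 * π))⁻¹
  rw [hfin] at final
  exact final.congr fun n => (hE n).symm

end LSBM
end
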